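/- arXiv:2203.12174 — 3 statements merged into one kernel-verified Lean document; each statement's English description precedes it below -/
import Mathlib

section
/- Let (H, ▷) be a post-Hopf algebra. Then the restriction of ▷ to the space P(H) of primitive elements is well-defined (i.e., x ▷ y is primitive whenever x, y are primitive), and (P(H), [·,·], ▷) is a post-Lie algebra, where [x,y] = xy − yx. -/
/-!
Post-Hopf algebras (Li–Sheng–Tang). We work over a commutative ring `R`.
`Coalgebra.comul (A := H ⊗[R] H)` refers to the standard coalgebra structure
on the tensor product, so that `comul_rhd`/`counit_rhd` say exactly that
`▷ : H ⊗ H → H` is a coalgebra homomorphism.  Sweedler sums such as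
`(x₁ ▷ y)·(x₂ ▷ z)` are expressed by applying suitable linear maps to
`Coalgebra.comul x`.
-/

open TensorProduct Coalgebra LinearMap HopfAlgebra

variable (R H : Type*) [CommRing R] [Ring H] [HopfAlgebra R H]

/-- The subadjacent product `x *▷ y = x₁ · (x₂ ▷ y)` as a linear map
`H ⊗ H → H`, built from a binary operation `rhd : H ⊗ H →ₗ H`. -/
noncomputable def subProd (rhd : H ⊗[R] H →ₗ[R] H) : H ⊗[R] H →ₗ[R] H :=
  LinearMap.mul' R H ∘ₗ TensorProduct.map LinearMap.id rhd
    ∘ₗ (TensorProduct.assoc R H H H).toLinearMap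
    ∘ₗ TensorProduct.map Coalgebra.comul LinearMap.id

/-- Convolution product on `Hom(H, End(H))`: `(f * g)(x) = f(x₁) ∘ g(x₂)`. -/
noncomputable def convEnd (f g : H →ₗ[R] Module.End R H) : H →ₗ[R] Module.End R H :=
  LinearMap.mul' R (Module.End R H) ∘ₗ TensorProduct.map f g ∘ₗ Coalgebra.comul

/-- The unit `x ↦ ε(x)·id` of the convolution algebra `Hom(H, End(H))`. -/
noncomputable def convUnit : H →ₗ[R] Module.End R H :=
  Algebra.linearMap R (Module.End R H) ∘ₗ Coalgebra.counit

/-- A post-Hopf algebra structure on the Hopf algebra `H`: a coalgebra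
homomorphism `▷ : H ⊗ H → H` satisfying
`x ▷ (y·z) = (x₁ ▷ y)·(x₂ ▷ z)`, `x ▷ (y ▷ z) = (x₁·(x₂ ▷ y)) ▷ z`, and
such that `α : H → End H`, `α_x = x ▷ -`, is convolution invertible. -/
structure PostHopf : Type _ where
  /-- the binary operation `▷` -/
  rhd : H ⊗[R] H →ₗ[R] H
  /-- `▷` is comultiplicative -/
  comul_rhd : Coalgebra.comul ∘ₗ rhd
      = TensorProduct.map rhd rhd ∘ₗ (Coalgebra.comul (R := R) (A := H ⊗[R] H))
  /-- `▷` is counital -/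
  counit_rhd : Coalgebra.counit ∘ₗ rhd = (Coalgebra.counit (R := R) (A := H ⊗[R] H))
  /-- `x ▷ (y·z) = (x₁ ▷ y)·(x₂ ▷ z)` -/
  rhd_mul : ∀ x y z : H,
    rhd (x ⊗ₜ (y * z))
      = LinearMap.mul' R H
          (TensorProduct.map (rhd ∘ₗ (TensorProduct.mk R H H).flip y)
            (rhd ∘ₗ (TensorProduct.mk R H H).flip z) (Coalgebra.comul x))
  /-- `x ▷ (y ▷ z) = (x₁·(x₂ ▷ y)) ▷ z` -/
  rhd_rhd : ∀ x y z : H,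
    rhd (x ⊗ₜ rhd (y ⊗ₜ z)) = rhd (subProd R H rhd (x ⊗ₜ y) ⊗ₜ z)
  /-- `α : x ↦ (x ▷ -)` is convolution invertible in `Hom(H, End H)` -/
  conv_invertible : ∃ β : H →ₗ[R] Module.End R H,
    convEnd R H ((TensorProduct.mk R H H).compr₂ rhd) β = convUnit R H ∧
    convEnd R H β ((TensorProduct.mk R H H).compr₂ rhd) = convUnit R H

/-- Cocommutativity of the coalgebra `H`. -/
def IsCocomm : Prop :=
  ∀ x : H, (TensorProduct.comm R H H) (Coalgebra.comul x) = Coalgebra.comul x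

/-- The subadjacent antipode `S▷(x) = β_{x₁}(S(x₂))`, built from a
convolution inverse `β` of the left multiplication. -/
noncomputable def subAntipode (β : H →ₗ[R] Module.End R H) : H →ₗ[R] H :=
  TensorProduct.lift (β.compl₂ (HopfAlgebra.antipode (R := R) (A := H)))
    ∘ₗ Coalgebra.comul

/-- An element is primitive if `Δ(x) = 1 ⊗ x + x ⊗ 1`. -/
def IsPrimitive (x : H) : Prop :=
  Coalgebra.comul (R := R) x = (1 : H) ⊗ₜ x + x ⊗ₜ (1 : H)

section Aux

variable {R H}

lemma comul_rhd_tmul (P : PostHopf R H) (x y : H) :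
    Coalgebra.comul (R := R) (P.rhd (x ⊗ₜ y))
      = TensorProduct.map P.rhd P.rhd
          ((TensorProduct.tensorTensorTensorComm R H H H H)
            (Coalgebra.comul x ⊗ₜ Coalgebra.comul y)) := by
  have h := LinearMap.congr_fun P.comul_rhd (x ⊗ₜ[R] y)
  simpa [TensorProduct.comul_def, TensorProduct.AlgebraTensorModule.tensorTensorTensorComm_eq] using h

lemma counit_rhd_tmul (P : PostHopf R H) (x y : H) :
    Coalgebra.counit (R := R) (P.rhd (x ⊗ₜ y))
      = Coalgebra.counit (R := R) x * Coalgebra.counit (R := R) y := by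
  have h := LinearMap.congr_fun P.counit_rhd (x ⊗ₜ[R] y)
  simpa [TensorProduct.counit_def, mul_comm] using h

lemma one_rhd_one (P : PostHopf R H) : P.rhd ((1 : H) ⊗ₜ (1 : H)) = 1 := by
  set u := P.rhd ((1 : H) ⊗ₜ (1 : H)) with hu
  have hone : (Coalgebra.comul (R := R) (1 : H)) = (1 : H) ⊗ₜ (1 : H) := by
    rw [Bialgebra.comul_one, Algebra.TensorProduct.one_def]
  have hc : Coalgebra.comul (R := R) u = u ⊗ₜ u := by
    rw [hu, comul_rhd_tmul, hone]
    simp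
  have hm : u * u = u := by
    have h := P.rhd_mul 1 1 1
    rw [hone] at h
    simpa [hu] using h.symm
  have hε : Coalgebra.counit (R := R) u = 1 := by
    rw [hu, counit_rhd_tmul]; simp
  have hinv : u * HopfAlgebra.antipode (R := R) u = 1 := by
    have h := HopfAlgebra.mul_antipode_lTensor_comul_apply (R := R) u
    rw [hc, hε] at h
    simpa using h
  calc u = u * (u * HopfAlgebra.antipode (R := R) u) := by rw [hinv, mul_one]
    _ = (u * u) * HopfAlgebra.antipode (R := R) u := (mul_assoc _ _ _).symm
    _ = u * HopfAlgebra.antipode (R := R) u := by rw [hm]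
    _ = 1 := hinv

lemma one_rhd (P : PostHopf R H) (y : H) : P.rhd ((1 : H) ⊗ₜ y) = y := by
  obtain ⟨β, hαβ, hβα⟩ := P.conv_invertible
  have hone : (Coalgebra.comul (R := R) (1 : H)) = (1 : H) ⊗ₜ (1 : H) := by
    rw [Bialgebra.comul_one, Algebra.TensorProduct.one_def]
  have hβ1 : ∀ w : H, β 1 (P.rhd ((1 : H) ⊗ₜ w)) = w := by
    intro w
    have h := LinearMap.congr_fun hβα (1 : H)
    rw [convEnd, convUnit] at h
    simp only [LinearMap.comp_apply, hone, TensorProduct.map_tmul] at h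
    have h2 := LinearMap.congr_fun h w
    simpa using h2
  have key : P.rhd ((1 : H) ⊗ₜ P.rhd ((1 : H) ⊗ₜ y)) = P.rhd ((1 : H) ⊗ₜ y) := by
    have h := P.rhd_rhd 1 1 y
    have hsub : subProd R H P.rhd ((1 : H) ⊗ₜ (1 : H)) = 1 := by
      rw [subProd]
      simp only [LinearMap.comp_apply, TensorProduct.map_tmul, LinearMap.id_apply, hone]
      simp [one_rhd_one]
    rw [hsub] at h
    exact h
  calc P.rhd ((1 : H) ⊗ₜ y) = β 1 (P.rhd ((1:H) ⊗ₜ (P.rhd ((1 : H) ⊗ₜ y)))) := (hβ1 _).symm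
    _ = β 1 (P.rhd ((1 : H) ⊗ₜ y)) := by rw [key]
    _ = y := hβ1 y

lemma rhd_one (P : PostHopf R H) {x : H} (hx : IsPrimitive R H x) :
    P.rhd (x ⊗ₜ (1 : H)) = 0 := by
  have h := P.rhd_mul x 1 1
  rw [hx] at h
  simp only [mul_one, map_add, TensorProduct.map_tmul, LinearMap.comp_apply,
    LinearMap.flip_apply, TensorProduct.mk_apply, LinearMap.mul'_apply, one_rhd_one,
    one_mul, mul_one] at h
  have : P.rhd (x ⊗ₜ (1:H)) = P.rhd (x ⊗ₜ (1:H)) + P.rhd (x ⊗ₜ (1:H)) := h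
  exact left_eq_add.mp this

end Aux

/-- In a post-Hopf algebra `(H, ▷)`, the operation `▷` restricts to the space
of primitive elements, and together with the commutator bracket it makes
`P(H)` a post-Lie algebra. -/

theorem primitives_postLie (P : PostHopf R H) :
    (∀ x y : H, IsPrimitive R H x → IsPrimitive R H y →
      IsPrimitive R H (P.rhd (x ⊗ₜ y))) ∧
    (∀ x y z : H, IsPrimitive R H x → IsPrimitive R H y → IsPrimitive R H z →
      P.rhd (x ⊗ₜ (y * z - z * y))
        = (P.rhd (x ⊗ₜ y) * z - z * P.rhd (x ⊗ₜ y))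
          + (y * P.rhd (x ⊗ₜ z) - P.rhd (x ⊗ₜ z) * y)) ∧
    (∀ x y z : H, IsPrimitive R H x → IsPrimitive R H y → IsPrimitive R H z →
      P.rhd (((x * y - y * x) + P.rhd (x ⊗ₜ y) - P.rhd (y ⊗ₜ x)) ⊗ₜ z)
        = P.rhd (x ⊗ₜ P.rhd (y ⊗ₜ z)) - P.rhd (y ⊗ₜ P.rhd (x ⊗ₜ z))) := by
  
  refine ⟨?_, ?_, ?_⟩
  · intro x y hx hy
    rw [IsPrimitive, comul_rhd_tmul, hx, hy]
    simp only [TensorProduct.tmul_add, TensorProduct.add_tmul, map_add,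
      TensorProduct.tensorTensorTensorComm_tmul, TensorProduct.map_tmul,
      one_rhd_one, one_rhd, rhd_one P hx, TensorProduct.tmul_zero,
      TensorProduct.zero_tmul, add_zero, zero_add]
  · intro x y z hx hy hz
    have h1 := P.rhd_mul x y z
    have h2 := P.rhd_mul x z y
    rw [hx] at h1 h2
    simp only [map_add, TensorProduct.map_tmul, LinearMap.comp_apply,
      LinearMap.flip_apply, TensorProduct.mk_apply, LinearMap.mul'_apply,
      one_rhd] at h1 h2
    rw [TensorProduct.tmul_sub, map_sub, h1, h2]
    noncomm_ring
  · intro x y z hx hy hz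
    have hsx : subProd R H P.rhd (x ⊗ₜ y) = P.rhd (x ⊗ₜ y) + x * y := by
      rw [subProd]
      simp only [LinearMap.comp_apply, TensorProduct.map_tmul, LinearMap.id_apply]
      rw [hx]
      simp [TensorProduct.add_tmul, one_rhd]
    have hsy : subProd R H P.rhd (y ⊗ₜ x) = P.rhd (y ⊗ₜ x) + y * x := by
      rw [subProd]
      simp only [LinearMap.comp_apply, TensorProduct.map_tmul, LinearMap.id_apply]
      rw [hy]
      simp [TensorProduct.add_tmul, one_rhd]
    have e1 := P.rhd_rhd x y z
    have e2 := P.rhd_rhd y x z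
    rw [hsx] at e1
    rw [hsy] at e2
    rw [e1, e2]
    simp only [TensorProduct.add_tmul, TensorProduct.sub_tmul, map_add, map_sub]
    abel
end

section
/- Let (H, ▷) be a cocommutative post-Hopf algebra. Then the Hopf algebras (H, ·, 1, Δ, ε, S) and (H, *▷, 1, Δ, ε, S▷) form a Hopf brace, i.e., x *▷ (y·z) = (x₁ *▷ y)·S(x₂)·(x₃ *▷ z) for all x, y, z ∈ H. -/
/-!
Post-Hopf algebras (Li–Sheng–Tang). We work over a commutative ring `R`.
`Coalgebra.comul (A := H ⊗[R] H)` refers to the standard coalgebra structure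
on the tensor product, so that `comul_rhd`/`counit_rhd` say exactly that
`▷ : H ⊗ H → H` is a coalgebra homomorphism.  Sweedler sums such as
`(x₁ ▷ y)·(x₂ ▷ z)` are expressed by applying suitable linear maps to
`Coalgebra.comul x`.
-/

open TensorProduct Coalgebra LinearMap HopfAlgebra

variable (R H : Type*) [CommRing R] [Ring H] [HopfAlgebra R H]

lemma subProd_repr (f : H ⊗[R] H →ₗ[R] H) {w : H} (rep : Coalgebra.Repr R w (H × H)) (v : H) :
    subProd R H f (w ⊗ₜ v) = ∑ i ∈ rep.index, rep.left i * f (rep.right i ⊗ₜ v) := by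
  rw [subProd]
  simp only [LinearMap.comp_apply, TensorProduct.map_tmul, LinearMap.id_coe, id_eq]
  rw [show Coalgebra.comul (R := R) w = ∑ i ∈ rep.index, rep.left i ⊗ₜ[R] rep.right i from rep.eq.symm]
  simp [TensorProduct.sum_tmul, map_sum, LinearMap.mul'_apply]

lemma F1_comul (g : H →ₗ[R] H) {w : H} (rep : Coalgebra.Repr R w (H × H)) :
    (LinearMap.mul' R H ∘ₗ TensorProduct.map LinearMap.id g) (Coalgebra.comul w)
      = ∑ k ∈ rep.index, rep.left k * g (rep.right k) := by
  rw [show Coalgebra.comul (R := R) w = ∑ k ∈ rep.index, rep.left k ⊗ₜ[R] rep.right k from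
    rep.eq.symm]
  simp [map_sum, LinearMap.mul'_apply]

lemma F2_comul (g g' : H →ₗ[R] H) (v : H) {w : H} (rep : Coalgebra.Repr R w (H × H)) :
    (LinearMap.mul' R H ∘ₗ TensorProduct.map g
      (LinearMap.mul' R H ∘ₗ TensorProduct.map LinearMap.id g')) (v ⊗ₜ Coalgebra.comul w)
      = ∑ m ∈ rep.index, g v * (rep.left m * g' (rep.right m)) := by
  rw [show Coalgebra.comul (R := R) w = ∑ k ∈ rep.index, rep.left k ⊗ₜ[R] rep.right k from
    rep.eq.symm]
  simp [TensorProduct.tmul_sum, map_sum, LinearMap.mul'_apply]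
lemma mulmap_comul (g : H →ₗ[R] H) {w : H} (rep : Coalgebra.Repr R w (H × H)) :
    LinearMap.mul' R H (TensorProduct.map LinearMap.id g (Coalgebra.comul w))
      = ∑ k ∈ rep.index, rep.left k * g (rep.right k) := by
  rw [show Coalgebra.comul (R := R) w = ∑ k ∈ rep.index, rep.left k ⊗ₜ[R] rep.right k from
    rep.eq.symm]
  simp [map_sum, LinearMap.mul'_apply]

/-- In a cocommutative post-Hopf algebra, the original Hopf algebra and the
subadjacent Hopf algebra form a Hopf brace:
`x *▷ (y·z) = (x₁ *▷ y)·S(x₂)·(x₃ *▷ z)`. -/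
theorem subadjacent_hopf_brace (P : PostHopf R H) (hcop : _root_.IsCocomm R H)
    (x y z : H) :
    subProd R H P.rhd (x ⊗ₜ (y * z))
      = LinearMap.mul' R H
          (TensorProduct.map
            (LinearMap.mul' R H ∘ₗ TensorProduct.map
              (subProd R H P.rhd ∘ₗ (TensorProduct.mk R H H).flip y)
              (HopfAlgebra.antipode (R := R) (A := H)))
            (subProd R H P.rhd ∘ₗ (TensorProduct.mk R H H).flip z)
            (TensorProduct.map Coalgebra.comul LinearMap.id
              (Coalgebra.comul x))) := by
  classical
  have r : Coalgebra.Repr R x (H × H) := Coalgebra.Repr.arbitrary R x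
  have rA : ∀ i, Coalgebra.Repr R (r.left i) (H × H) := fun _ => Coalgebra.Repr.arbitrary R _
  have rB : ∀ i, Coalgebra.Repr R (r.right i) (H × H) := fun _ => Coalgebra.Repr.arbitrary R _
  have rP : ∀ i j, Coalgebra.Repr R ((rA i).left j) (H × H) := fun _ _ => Coalgebra.Repr.arbitrary R _
  have rC : ∀ i l, Coalgebra.Repr R ((rB i).left l) (H × H) := fun _ _ => Coalgebra.Repr.arbitrary R _
  have rD : ∀ i l, Coalgebra.Repr R ((rB i).right l) (H × H) := fun _ _ => Coalgebra.Repr.arbitrary R _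
  -- notation
  set S' : H →ₗ[R] H := HopfAlgebra.antipode (R := R) (A := H) with hS'
  -- Step 1: unfold the right-hand side
  have h1 : LinearMap.mul' R H
          (TensorProduct.map
            (LinearMap.mul' R H ∘ₗ TensorProduct.map
              (subProd R H P.rhd ∘ₗ (TensorProduct.mk R H H).flip y)
              (HopfAlgebra.antipode (R := R) (A := H)))
            (subProd R H P.rhd ∘ₗ (TensorProduct.mk R H H).flip z)
            (TensorProduct.map Coalgebra.comul LinearMap.id
              (Coalgebra.comul x)))
      = ∑ i ∈ r.index, ∑ j ∈ (rA i).index,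
          (subProd R H P.rhd ((rA i).left j ⊗ₜ y) * S' ((rA i).right j))
            * subProd R H P.rhd (r.right i ⊗ₜ z) := by
    rw [show Coalgebra.comul x = ∑ i ∈ r.index, r.left i ⊗ₜ[R] r.right i from r.eq.symm]
    simp only [map_sum, TensorProduct.map_tmul, LinearMap.id_coe, id_eq, LinearMap.mul'_apply]
    refine Finset.sum_congr rfl fun i _ => ?_
    rw [show Coalgebra.comul (r.left i) = ∑ j ∈ (rA i).index, (rA i).left j ⊗ₜ[R] (rA i).right j
      from (rA i).eq.symm]
    simp only [map_sum, TensorProduct.map_tmul, LinearMap.coe_comp, Function.comp_apply,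
      LinearMap.mul'_apply, LinearMap.flip_apply, TensorProduct.mk_apply, Finset.sum_mul]
    rfl

  -- mapped top coassociativity
  have htop := Coalgebra.sum_tmul_tmul_eq (R := R) r rA rB
  have htop2 := congrArg
    (⇑(LinearMap.mul' R H ∘ₗ
        TensorProduct.map
          (LinearMap.mul' R H ∘ₗ TensorProduct.map LinearMap.id
            (P.rhd ∘ₗ (TensorProduct.mk R H H).flip y))
          (LinearMap.mul' R H ∘ₗ TensorProduct.map S'
            (LinearMap.mul' R H ∘ₗ TensorProduct.map LinearMap.id
              (P.rhd ∘ₗ (TensorProduct.mk R H H).flip z))) ∘ₗ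
        TensorProduct.map Coalgebra.comul
          (TensorProduct.map LinearMap.id Coalgebra.comul))) htop
  -- compute both sides of htop2
  have hY : ∑ i ∈ r.index, ∑ j ∈ (rA i).index,
        (∑ k ∈ (rP i j).index, (rP i j).left k * P.rhd ((rP i j).right k ⊗ₜ y))
          * ∑ l ∈ (rB i).index,
              S' ((rA i).right j) * ((rB i).left l * P.rhd ((rB i).right l ⊗ₜ z))
      = ∑ i ∈ r.index, ∑ l ∈ (rB i).index,
          (∑ j ∈ (rA i).index, (rA i).left j * P.rhd ((rA i).right j ⊗ₜ y))
            * ∑ m ∈ (rD i l).index,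
                S' ((rB i).left l) * ((rD i l).left m * P.rhd ((rD i l).right m ⊗ₜ z)) := by
    simp only [map_sum, LinearMap.coe_comp, Function.comp_apply, TensorProduct.map_tmul,
      LinearMap.id_coe, id_eq, LinearMap.mul'_apply, LinearMap.flip_apply,
      TensorProduct.mk_apply] at htop2
    refine Eq.trans ?_ (htop2.trans ?_)
    · refine Finset.sum_congr rfl fun i _ => Finset.sum_congr rfl fun j _ => ?_
      rw [mulmap_comul R H _ (rP i j), mulmap_comul R H _ (rB i)]
      simp [Finset.mul_sum, LinearMap.flip_apply]
    · refine Finset.sum_congr rfl fun i _ => Finset.sum_congr rfl fun l _ => ?_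
      rw [mulmap_comul R H _ (rA i), mulmap_comul R H _ (rD i l)]
      simp [Finset.mul_sum, LinearMap.flip_apply]
  -- cancellation chain
  have hcan : ∀ i, ∑ l ∈ (rB i).index, ∑ m ∈ (rD i l).index,
        S' ((rB i).left l) * ((rD i l).left m * P.rhd ((rD i l).right m ⊗ₜ z))
      = ∑ l ∈ (rB i).index, ∑ m ∈ (rC i l).index,
        S' ((rC i l).left m) * ((rC i l).right m * P.rhd ((rB i).right l ⊗ₜ z)) := by
    intro i
    have h := Coalgebra.sum_tmul_tmul_eq (R := R) (rB i) (rC i) (rD i)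
    have h2 := congrArg (⇑(LinearMap.mul' R H ∘ₗ TensorProduct.map S'
      (LinearMap.mul' R H ∘ₗ TensorProduct.map LinearMap.id
        (P.rhd ∘ₗ (TensorProduct.mk R H H).flip z)))) h
    simp only [map_sum, LinearMap.coe_comp, Function.comp_apply, TensorProduct.map_tmul,
      LinearMap.id_coe, id_eq, LinearMap.mul'_apply, LinearMap.flip_apply,
      TensorProduct.mk_apply] at h2
    exact h2.symm
  have h5 : ∀ i l, ∑ m ∈ (rC i l).index,
        S' ((rC i l).left m) * ((rC i l).right m * P.rhd ((rB i).right l ⊗ₜ z))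
      = algebraMap R H (Coalgebra.counit ((rB i).left l)) * P.rhd ((rB i).right l ⊗ₜ z) := by
    intro i l
    simp_rw [← mul_assoc, ← Finset.sum_mul]
    rw [hS', HopfAlgebra.sum_antipode_mul_eq_algebraMap_counit (rC i l)]
  have h6 : ∀ i, ∑ l ∈ (rB i).index,
        algebraMap R H (Coalgebra.counit ((rB i).left l)) * P.rhd ((rB i).right l ⊗ₜ z)
      = P.rhd (r.right i ⊗ₜ z) := by
    intro i
    have h := congrArg (⇑(TensorProduct.lid R H))
      (Coalgebra.sum_counit_tmul_map_eq (R := R)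
        (P.rhd ∘ₗ (TensorProduct.mk R H H).flip z) (r.right i) (repr := rB i))
    simp only [map_sum, TensorProduct.lid_tmul, one_smul, LinearMap.coe_comp,
      Function.comp_apply, LinearMap.flip_apply, TensorProduct.mk_apply] at h
    simpa [Algebra.smul_def] using h
  -- mapped top coassociativity, second use
  have hμ : ∑ i ∈ r.index, ∑ j ∈ (rA i).index,
        (rA i).left j * (P.rhd ((rA i).right j ⊗ₜ y) * P.rhd (r.right i ⊗ₜ z))
      = ∑ i ∈ r.index, ∑ l ∈ (rB i).index,
          r.left i * (P.rhd ((rB i).left l ⊗ₜ y) * P.rhd ((rB i).right l ⊗ₜ z)) := by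
    have h2 := congrArg (⇑(LinearMap.mul' R H ∘ₗ TensorProduct.map LinearMap.id
      (LinearMap.mul' R H ∘ₗ TensorProduct.map (P.rhd ∘ₗ (TensorProduct.mk R H H).flip y)
        (P.rhd ∘ₗ (TensorProduct.mk R H H).flip z)))) htop
    simp only [map_sum, LinearMap.coe_comp, Function.comp_apply, TensorProduct.map_tmul,
      LinearMap.id_coe, id_eq, LinearMap.mul'_apply, LinearMap.flip_apply,
      TensorProduct.mk_apply] at h2
    exact h2
  -- unfold the left-hand side
  have hL : subProd R H P.rhd (x ⊗ₜ (y * z))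
      = ∑ i ∈ r.index, ∑ l ∈ (rB i).index,
          r.left i * (P.rhd ((rB i).left l ⊗ₜ y) * P.rhd ((rB i).right l ⊗ₜ z)) := by
    rw [subProd_repr R H P.rhd r (y * z)]
    refine Finset.sum_congr rfl fun i _ => ?_
    rw [P.rhd_mul (r.right i) y z,
      show Coalgebra.comul (r.right i)
        = ∑ l ∈ (rB i).index, (rB i).left l ⊗ₜ[R] (rB i).right l from (rB i).eq.symm]
    simp [map_sum, LinearMap.mul'_apply, Finset.mul_sum]
  -- assemble
  rw [hL, h1]
  calc ∑ i ∈ r.index, ∑ l ∈ (rB i).index,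
        r.left i * (P.rhd ((rB i).left l ⊗ₜ y) * P.rhd ((rB i).right l ⊗ₜ z))
      = ∑ i ∈ r.index, ∑ j ∈ (rA i).index,
          (rA i).left j * (P.rhd ((rA i).right j ⊗ₜ y) * P.rhd (r.right i ⊗ₜ z)) := hμ.symm
    _ = ∑ i ∈ r.index,
          (∑ j ∈ (rA i).index, (rA i).left j * P.rhd ((rA i).right j ⊗ₜ y))
            * P.rhd (r.right i ⊗ₜ z) := by
        refine Finset.sum_congr rfl fun i _ => ?_
        rw [Finset.sum_mul]
        exact Finset.sum_congr rfl fun j _ => (mul_assoc _ _ _).symm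
    _ = ∑ i ∈ r.index,
          (∑ j ∈ (rA i).index, (rA i).left j * P.rhd ((rA i).right j ⊗ₜ y))
            * ∑ l ∈ (rB i).index, ∑ m ∈ (rD i l).index,
                S' ((rB i).left l) * ((rD i l).left m * P.rhd ((rD i l).right m ⊗ₜ z)) := by
        refine Finset.sum_congr rfl fun i _ => ?_
        rw [hcan i]
        congr 1
        rw [← h6 i]
        exact Finset.sum_congr rfl fun l _ => by rw [h5 i l]
    _ = ∑ i ∈ r.index, ∑ l ∈ (rB i).index,
          (∑ j ∈ (rA i).index, (rA i).left j * P.rhd ((rA i).right j ⊗ₜ y))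
            * ∑ m ∈ (rD i l).index,
                S' ((rB i).left l) * ((rD i l).left m * P.rhd ((rD i l).right m ⊗ₜ z)) := by
        exact Finset.sum_congr rfl fun i _ => Finset.mul_sum _ _ _
    _ = ∑ i ∈ r.index, ∑ j ∈ (rA i).index,
          (∑ k ∈ (rP i j).index, (rP i j).left k * P.rhd ((rP i j).right k ⊗ₜ y))
            * ∑ l ∈ (rB i).index,
                S' ((rA i).right j) * ((rB i).left l * P.rhd ((rB i).right l ⊗ₜ z)) := hY.symm
    _ = ∑ i ∈ r.index, ∑ j ∈ (rA i).index,
          (subProd R H P.rhd ((rA i).left j ⊗ₜ y) * S' ((rA i).right j))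
            * subProd R H P.rhd (r.right i ⊗ₜ z) := by
        refine Finset.sum_congr rfl fun i _ => Finset.sum_congr rfl fun j _ => ?_
        rw [subProd_repr R H P.rhd (rP i j) y, subProd_repr R H P.rhd (rB i) z,
          mul_assoc]
        simp [Finset.mul_sum]
end

section
/- Let T : K → H be a relative Rota-Baxter operator with respect to a left H-module bialgebra (K, ⇀). Then a ▷_T b := T(a) ⇀ b defines a post-Hopf algebra structure on K. -/
/-!
Post-Hopf algebras (Li–Sheng–Tang). We work over a commutative ring `R`.
`Coalgebra.comul (A := H ⊗[R] H)` refers to the standard coalgebra structure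
on the tensor product, so that `comul_rhd`/`counit_rhd` say exactly that
`▷ : H ⊗ H → H` is a coalgebra homomorphism.  Sweedler sums such as
`(x₁ ▷ y)·(x₂ ▷ z)` are expressed by applying suitable linear maps to
`Coalgebra.comul x`.
-/

open TensorProduct Coalgebra LinearMap HopfAlgebra

variable (R H : Type*) [CommRing R] [Ring H] [HopfAlgebra R H]

variable (K : Type*) [Ring K] [HopfAlgebra R K]

/-- `K` is a left `H`-module bialgebra via `act`. -/
structure IsModuleBialgebra (act : H ⊗[R] K →ₗ[R] K) : Prop where
  one_act : ∀ a : K, act ((1 : H) ⊗ₜ a) = a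
  mul_act : ∀ (x y : H) (a : K), act ((x * y) ⊗ₜ a) = act (x ⊗ₜ act (y ⊗ₜ a))
  act_mul : ∀ (x : H) (a b : K),
    act (x ⊗ₜ (a * b))
      = LinearMap.mul' R K
          (TensorProduct.map (act ∘ₗ (TensorProduct.mk R H K).flip a)
            (act ∘ₗ (TensorProduct.mk R H K).flip b) (Coalgebra.comul x))
  act_one : ∀ x : H, act (x ⊗ₜ (1 : K)) = Coalgebra.counit (R := R) x • (1 : K)
  comul_act : Coalgebra.comul ∘ₗ act
      = TensorProduct.map act act ∘ₗ (Coalgebra.comul (R := R) (A := H ⊗[R] K))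
  counit_act : Coalgebra.counit ∘ₗ act = (Coalgebra.counit (R := R) (A := H ⊗[R] K))

/-- `T : K → H` is a coalgebra homomorphism. -/
structure IsCoalgHom (T : K →ₗ[R] H) : Prop where
  comul_comp : Coalgebra.comul ∘ₗ T = TensorProduct.map T T ∘ₗ Coalgebra.comul
  counit_comp : Coalgebra.counit ∘ₗ T = (Coalgebra.counit (R := R) (A := K))

/-- The descendent product `a *_T b = a₁·(T(a₂) ⇀ b)` as a linear map. -/
noncomputable def descProd (act : H ⊗[R] K →ₗ[R] K) (T : K →ₗ[R] H) :
    K ⊗[R] K →ₗ[R] K :=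
  LinearMap.mul' R K
    ∘ₗ TensorProduct.map LinearMap.id (act ∘ₗ TensorProduct.map T LinearMap.id)
    ∘ₗ (TensorProduct.assoc R K K K).toLinearMap
    ∘ₗ TensorProduct.map Coalgebra.comul LinearMap.id

/-- The relative Rota–Baxter identity `T(a)·T(b) = T(a₁·(T(a₂) ⇀ b))`. -/
def IsRelRotaBaxter (act : H ⊗[R] K →ₗ[R] K) (T : K →ₗ[R] H) : Prop :=
  ∀ a b : K, T a * T b = T (descProd R H K act T (a ⊗ₜ b))


section MyAux

lemma myTttNat {R M N P Q M' N' P' Q' : Type*} [CommRing R]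
    [AddCommMonoid M] [AddCommMonoid N] [AddCommMonoid P] [AddCommMonoid Q]
    [AddCommMonoid M'] [AddCommMonoid N'] [AddCommMonoid P'] [AddCommMonoid Q']
    [Module R M] [Module R N] [Module R P] [Module R Q]
    [Module R M'] [Module R N'] [Module R P'] [Module R Q']
    (f : M →ₗ[R] M') (g : N →ₗ[R] N') (h : P →ₗ[R] P') (k : Q →ₗ[R] Q') :
    TensorProduct.map (TensorProduct.map f h) (TensorProduct.map g k) ∘ₗ
      (TensorProduct.tensorTensorTensorComm R M N P Q).toLinearMap
    = (TensorProduct.tensorTensorTensorComm R M' N' P' Q').toLinearMap ∘ₗ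
      TensorProduct.map (TensorProduct.map f g) (TensorProduct.map h k) := by
  apply TensorProduct.ext_fourfold'
  intro m n p q
  simp

end MyAux

/-- A relative Rota–Baxter operator `T : K → H` with respect to a left
`H`-module bialgebra `(K, ⇀)` induces a post-Hopf algebra structure
`a ▷_T b = T(a) ⇀ b` on `K`. -/
theorem relRotaBaxter_to_postHopf (act : H ⊗[R] K →ₗ[R] K) (T : K →ₗ[R] H)
    (hmb : IsModuleBialgebra R H K act) (hT : IsCoalgHom R H K T)
    (hrb : IsRelRotaBaxter R H K act T) :
    ∃ P : PostHopf R K, P.rhd = act ∘ₗ TensorProduct.map T LinearMap.id := by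
  obtain ⟨hcomT, hcouT⟩ := hT
  set rhd : K ⊗[R] K →ₗ[R] K := act ∘ₗ TensorProduct.map T LinearMap.id with hrhd
  have hrhd_tmul : ∀ (a b : K), rhd (a ⊗ₜ[R] b) = act (T a ⊗ₜ[R] b) := by
    intro a b; simp [hrhd]
  refine ⟨⟨rhd, ?_, ?_, ?_, ?_, ?_⟩, rfl⟩
  · -- comul_rhd
    have h1 : TensorProduct.map (Coalgebra.comul (R := R) (A := H))
          (Coalgebra.comul (R := R) (A := K)) ∘ₗ TensorProduct.map T LinearMap.id
        = TensorProduct.map (TensorProduct.map T T) (TensorProduct.map LinearMap.id LinearMap.id)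
          ∘ₗ TensorProduct.map Coalgebra.comul Coalgebra.comul := by
      rw [← TensorProduct.map_comp, ← TensorProduct.map_comp, hcomT]
      congr 1
      simp [TensorProduct.map_id]
    have h2 := (myTttNat (R := R) T T (LinearMap.id : K →ₗ[R] K) (LinearMap.id : K →ₗ[R] K)).symm
    calc Coalgebra.comul ∘ₗ rhd
        = (Coalgebra.comul ∘ₗ act) ∘ₗ TensorProduct.map T LinearMap.id := by
          rw [hrhd, LinearMap.comp_assoc]
      _ = (TensorProduct.map act act ∘ₗ (Coalgebra.comul (R := R) (A := H ⊗[R] K)))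
            ∘ₗ TensorProduct.map T LinearMap.id := by rw [hmb.comul_act]
      _ = ((TensorProduct.map act act ∘ₗ
              (TensorProduct.tensorTensorTensorComm R H H K K).toLinearMap)
            ∘ₗ (TensorProduct.map Coalgebra.comul Coalgebra.comul
            ∘ₗ TensorProduct.map T LinearMap.id)) := by
          rw [show Coalgebra.comul (R := R) (A := H ⊗[R] K) =
            (TensorProduct.tensorTensorTensorComm R H H K K).toLinearMap ∘ₗ
              TensorProduct.map Coalgebra.comul Coalgebra.comul from rfl]
          simp only [LinearMap.comp_assoc]
      _ = (TensorProduct.map act act ∘ₗ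
            ((TensorProduct.tensorTensorTensorComm R H H K K).toLinearMap
              ∘ₗ TensorProduct.map (TensorProduct.map T T)
                (TensorProduct.map LinearMap.id LinearMap.id)))
            ∘ₗ TensorProduct.map Coalgebra.comul Coalgebra.comul := by
          rw [h1]; simp only [LinearMap.comp_assoc]
      _ = (TensorProduct.map act act ∘ₗ
            (TensorProduct.map (TensorProduct.map T LinearMap.id)
                (TensorProduct.map T LinearMap.id)
              ∘ₗ (TensorProduct.tensorTensorTensorComm R K K K K).toLinearMap))
            ∘ₗ TensorProduct.map Coalgebra.comul Coalgebra.comul := by rw [h2]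
      _ = TensorProduct.map rhd rhd ∘ₗ (Coalgebra.comul (R := R) (A := K ⊗[R] K)) := by
          rw [show Coalgebra.comul (R := R) (A := K ⊗[R] K) =
            (TensorProduct.tensorTensorTensorComm R K K K K).toLinearMap ∘ₗ
              TensorProduct.map Coalgebra.comul Coalgebra.comul from rfl]
          simp only [← LinearMap.comp_assoc, ← TensorProduct.map_comp]
          rfl
  · -- counit_rhd
    calc Coalgebra.counit ∘ₗ rhd
        = (Coalgebra.counit ∘ₗ act) ∘ₗ TensorProduct.map T LinearMap.id := by
          rw [hrhd, LinearMap.comp_assoc]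
      _ = (Coalgebra.counit (R := R) (A := H ⊗[R] K)) ∘ₗ TensorProduct.map T LinearMap.id := by
          rw [hmb.counit_act]
      _ = (Coalgebra.counit (R := R) (A := K ⊗[R] K)) := by
          rw [show Coalgebra.counit (R := R) (A := H ⊗[R] K) =
            (TensorProduct.rid R R).toLinearMap ∘ₗ
              TensorProduct.map Coalgebra.counit Coalgebra.counit from rfl,
            show Coalgebra.counit (R := R) (A := K ⊗[R] K) =
            (TensorProduct.rid R R).toLinearMap ∘ₗ
              TensorProduct.map Coalgebra.counit Coalgebra.counit from rfl,
            LinearMap.comp_assoc, ← TensorProduct.map_comp, hcouT]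
          rw [LinearMap.comp_id]
  · -- rhd_mul
    intro x y z
    have hx : Coalgebra.comul (T x) = TensorProduct.map T T (Coalgebra.comul x) :=
      LinearMap.congr_fun hcomT x
    have hy : ∀ w : K, (act ∘ₗ (TensorProduct.mk R H K).flip w) ∘ₗ T
        = rhd ∘ₗ (TensorProduct.mk R K K).flip w := by
      intro w; ext a; simp [hrhd]
    rw [hrhd_tmul, hmb.act_mul, hx, ← LinearMap.comp_apply (TensorProduct.map _ _),
      ← TensorProduct.map_comp, hy, hy]
  · -- rhd_rhd
    intro x y z
    have hsub : subProd R K rhd = descProd R H K act T := rfl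
    rw [hsub, hrhd_tmul, hrhd_tmul y z, hrhd_tmul, ← hmb.mul_act, hrb]
  · -- conv_invertible
    refine ⟨((TensorProduct.mk R H K).compr₂ act) ∘ₗ
      (HopfAlgebra.antipode (R := R) (A := H)) ∘ₗ T, ?_, ?_⟩
    · apply LinearMap.ext; intro a
      apply LinearMap.ext; intro b
      have claim1 : (LinearMap.applyₗ b) ∘ₗ (LinearMap.mul' R (Module.End R K)) ∘ₗ
            TensorProduct.map ((TensorProduct.mk R K K).compr₂ rhd)
              (((TensorProduct.mk R H K).compr₂ act) ∘ₗ
                (HopfAlgebra.antipode (R := R) (A := H)) ∘ₗ T)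
          = (act ∘ₗ (TensorProduct.mk R H K).flip b) ∘ₗ
              (LinearMap.mul' R H ∘ₗ (HopfAlgebra.antipode (R := R) (A := H)).lTensor H)
            ∘ₗ TensorProduct.map T T := by
        apply TensorProduct.ext'
        intro u v
        simp only [LinearMap.comp_apply, TensorProduct.map_tmul, LinearMap.mul'_apply,
          LinearMap.applyₗ_apply_apply, Module.End.mul_apply, LinearMap.compr₂_apply,
          TensorProduct.mk_apply, LinearMap.lTensor_tmul, LinearMap.flip_apply, hrhd_tmul]
        rw [← hmb.mul_act]
      have e1 : convEnd R K ((TensorProduct.mk R K K).compr₂ rhd)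
            (((TensorProduct.mk R H K).compr₂ act) ∘ₗ
              (HopfAlgebra.antipode (R := R) (A := H)) ∘ₗ T) a b
          = ((act ∘ₗ (TensorProduct.mk R H K).flip b) ∘ₗ
              (LinearMap.mul' R H ∘ₗ (HopfAlgebra.antipode (R := R) (A := H)).lTensor H))
              (TensorProduct.map T T (Coalgebra.comul a)) := by
        have := LinearMap.congr_fun claim1 (Coalgebra.comul a)
        simpa [convEnd, LinearMap.comp_apply] using this
      have hx := LinearMap.congr_fun hcomT a
      simp only [LinearMap.comp_apply] at hx
      rw [e1, ← hx]
      have e2 := LinearMap.congr_fun (HopfAlgebra.mul_antipode_lTensor_comul (R := R) (A := H)) (T a)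
      simp only [LinearMap.comp_apply] at e2 ⊢
      rw [e2]
      have e3 : Coalgebra.counit (R := R) (T a) = Coalgebra.counit (R := R) a :=
        LinearMap.congr_fun hcouT a
      simp [convUnit, e3, Algebra.linearMap_apply, Algebra.algebraMap_eq_smul_one,
        hmb.one_act, Module.algebraMap_end_apply]
    · apply LinearMap.ext; intro a
      apply LinearMap.ext; intro b
      have claim1 : (LinearMap.applyₗ b) ∘ₗ (LinearMap.mul' R (Module.End R K)) ∘ₗ
            TensorProduct.map
              (((TensorProduct.mk R H K).compr₂ act) ∘ₗ
                (HopfAlgebra.antipode (R := R) (A := H)) ∘ₗ T)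
              ((TensorProduct.mk R K K).compr₂ rhd)
          = (act ∘ₗ (TensorProduct.mk R H K).flip b) ∘ₗ
              (LinearMap.mul' R H ∘ₗ (HopfAlgebra.antipode (R := R) (A := H)).rTensor H)
            ∘ₗ TensorProduct.map T T := by
        apply TensorProduct.ext'
        intro u v
        simp only [LinearMap.comp_apply, TensorProduct.map_tmul, LinearMap.mul'_apply,
          LinearMap.applyₗ_apply_apply, Module.End.mul_apply, LinearMap.compr₂_apply,
          TensorProduct.mk_apply, LinearMap.rTensor_tmul, LinearMap.flip_apply, hrhd_tmul]
        rw [← hmb.mul_act]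
      have e1 : convEnd R K
            (((TensorProduct.mk R H K).compr₂ act) ∘ₗ
              (HopfAlgebra.antipode (R := R) (A := H)) ∘ₗ T)
            ((TensorProduct.mk R K K).compr₂ rhd) a b
          = ((act ∘ₗ (TensorProduct.mk R H K).flip b) ∘ₗ
              (LinearMap.mul' R H ∘ₗ (HopfAlgebra.antipode (R := R) (A := H)).rTensor H))
              (TensorProduct.map T T (Coalgebra.comul a)) := by
        have := LinearMap.congr_fun claim1 (Coalgebra.comul a)
        simpa [convEnd, LinearMap.comp_apply] using this
      have hx := LinearMap.congr_fun hcomT a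
      simp only [LinearMap.comp_apply] at hx
      rw [e1, ← hx]
      have e2 := LinearMap.congr_fun (HopfAlgebra.mul_antipode_rTensor_comul (R := R) (A := H)) (T a)
      simp only [LinearMap.comp_apply] at e2 ⊢
      rw [e2]
      have e3 : Coalgebra.counit (R := R) (T a) = Coalgebra.counit (R := R) a :=
        LinearMap.congr_fun hcouT a
      simp [convUnit, e3, Algebra.linearMap_apply, Algebra.algebraMap_eq_smul_one,
        hmb.one_act, Module.algebraMap_end_apply]
end
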